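/- arXiv:2202.01864 — 2 statements merged into one kernel-verified Lean document; each statement's English description precedes it below -/
import Mathlib

section
/- Let U, E, F be independent standard Gaussian random variables and let τ = (τ₁, τ₂, τ₃) ∈ ℝ³. If the random variables Σ_{i=1}^{3} τ_i (U + E)^i + U + F and Σ_{i=1}^{3} τ_i (1 + U + E)^i + U + F have the same distribution, then τ₁ = τ₂ = τ₃ = 0. -/
open MeasureTheory ProbabilityTheory Real

lemma integrable_pow_gauss (n : ℕ) :
    Integrable (fun x : ℝ => x ^ n * Real.exp (-(1/2) * x ^ 2)) := by
  have h := integrable_rpow_mul_exp_neg_mul_sq (b := 1/2) (by norm_num)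
    (s := (n : ℝ)) (lt_of_lt_of_le (by norm_num) (Nat.cast_nonneg n))
  simpa [Real.rpow_natCast] using h

lemma J_rec (n : ℕ) :
    (∫ x : ℝ, x ^ (n+2) * Real.exp (-(1/2) * x ^ 2))
      = (n+1 : ℝ) * ∫ x : ℝ, x ^ n * Real.exp (-(1/2) * x ^ 2) := by
  have hd : ∀ x : ℝ, HasDerivAt (fun x : ℝ => x ^ (n+1) * Real.exp (-(1/2) * x ^ 2))
      ((n+1 : ℝ) * (x ^ n * Real.exp (-(1/2) * x ^ 2))
        - x ^ (n+2) * Real.exp (-(1/2) * x ^ 2)) x := by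
    intro x
    have h1 : HasDerivAt (fun x : ℝ => x ^ (n+1)) ((n+1 : ℝ) * x ^ n) x := by
      simpa using hasDerivAt_pow (n+1) x
    have h2 : HasDerivAt (fun x : ℝ => Real.exp (-(1/2) * x ^ 2))
        ((-(1/2) * (2 * x)) * Real.exp (-(1/2) * x ^ 2)) x := by
      have hx : HasDerivAt (fun x : ℝ => -(1/2) * x ^ 2) (-(1/2) * (2 * x)) x := by
        simpa using (hasDerivAt_pow 2 x).const_mul (-(1/2) : ℝ)
      simpa [mul_comm] using hx.exp
    have := h1.mul h2
    refine this.congr_deriv ?_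
    push_cast
    ring
  have hint : Integrable (fun x : ℝ => (n+1 : ℝ) * (x ^ n * Real.exp (-(1/2) * x ^ 2))
      - x ^ (n+2) * Real.exp (-(1/2) * x ^ 2)) := by
    exact ((integrable_pow_gauss n).const_mul _).sub (integrable_pow_gauss (n+2))
  have h0 := integral_eq_zero_of_hasDerivAt_of_integrable hd hint (integrable_pow_gauss (n+1))
  rw [integral_sub ((integrable_pow_gauss n).const_mul _) (integrable_pow_gauss (n+2)),
    integral_const_mul] at h0
  linarith
noncomputable def Mo (n : ℕ) : ℝ := ∫ x, x ^ n ∂(gaussianReal 0 1)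

lemma gauss_density (g : ℝ → ℝ) :
    ∫ x, g x ∂(gaussianReal 0 1)
      = ∫ x, gaussianPDFReal 0 1 x * g x := by
  rw [gaussianReal_of_var_ne_zero 0 one_ne_zero]
  have hmeas : Measurable (fun x => (gaussianPDFReal 0 1 x).toNNReal) :=
    (measurable_gaussianPDFReal 0 1).real_toNNReal
  have : gaussianPDF 0 1 = fun x => (((fun x => (gaussianPDFReal 0 1 x).toNNReal) x : NNReal) : ENNReal) := by
    funext x
    simp [gaussianPDF, ENNReal.ofReal]
  rw [this, integral_withDensity_eq_integral_smul hmeas]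
  congr 1
  funext x
  simp [NNReal.smul_def, Real.coe_toNNReal _ (gaussianPDFReal_nonneg 0 1 x)]

lemma gauss_pdf_eq (x : ℝ) :
    gaussianPDFReal 0 1 x = (Real.sqrt (2 * Real.pi))⁻¹ * Real.exp (-(1/2) * x ^ 2) := by
  rw [gaussianPDFReal]
  norm_num
  left
  ring_nf

lemma integrable_pow_gaussianReal (n : ℕ) :
    Integrable (fun x : ℝ => x ^ n) (gaussianReal 0 1) := by
  rw [gaussianReal_of_var_ne_zero 0 one_ne_zero]
  have hmeas : Measurable (fun x => (gaussianPDFReal 0 1 x).toNNReal) :=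
    (measurable_gaussianPDFReal 0 1).real_toNNReal
  have h : gaussianPDF 0 1 = fun x => (((fun x => (gaussianPDFReal 0 1 x).toNNReal) x : NNReal) : ENNReal) := by
    funext x
    simp [gaussianPDF, ENNReal.ofReal]
  rw [h, integrable_withDensity_iff_integrable_smul hmeas]
  have : (fun x : ℝ => (gaussianPDFReal 0 1 x).toNNReal • x ^ n)
      = fun x : ℝ => (Real.sqrt (2 * Real.pi))⁻¹ * (x ^ n * Real.exp (-(1/2) * x ^ 2)) := by
    funext x
    rw [NNReal.smul_def, Real.coe_toNNReal _ (gaussianPDFReal_nonneg 0 1 x), gauss_pdf_eq, smul_eq_mul]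
    ring
  rw [this]
  exact (integrable_pow_gauss n).const_mul _

lemma Mo_eq (n : ℕ) :
    Mo n = (Real.sqrt (2 * Real.pi))⁻¹ * ∫ x : ℝ, x ^ n * Real.exp (-(1/2) * x ^ 2) := by
  rw [Mo, gauss_density]
  rw [← integral_const_mul]
  congr 1
  funext x
  rw [gauss_pdf_eq]
  ring

lemma Mo_rec (n : ℕ) : Mo (n + 2) = (n + 1 : ℝ) * Mo n := by
  rw [Mo_eq, Mo_eq, J_rec]
  ring

lemma Mo_zero : Mo 0 = 1 := by
  simp [Mo]

lemma Mo_odd (n : ℕ) (hn : Odd n) : Mo n = 0 := by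
  have hmap : (gaussianReal 0 1).map (fun x => -x) = gaussianReal 0 1 := by
    have h := gaussianReal_map_const_mul (μ := 0) (v := 1) (-1)
    have he : (fun x : ℝ => -x) = fun x : ℝ => (-1) * x := by funext x; ring
    rw [he]
    convert h using 2
    · norm_num
    · ext
      norm_num
  have h1 : Mo n = ∫ x, x ^ n ∂((gaussianReal 0 1).map (fun x => -x)) := by rw [hmap]; rfl
  rw [integral_map (φ := fun x : ℝ => -x) (f := fun x : ℝ => x ^ n) measurable_neg.aemeasurable
    (by fun_prop : Measurable (fun x : ℝ => x ^ n)).aestronglyMeasurable] at h1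
  have h2 : (∫ x, (-x) ^ n ∂(gaussianReal 0 1)) = - Mo n := by
    simp_rw [hn.neg_pow]
    rw [integral_neg]
    rfl
  rw [h2] at h1
  linarith

lemma Mo_one : Mo 1 = 0 := Mo_odd 1 ⟨0, by norm_num⟩
lemma Mo_two : Mo 2 = 1 := by rw [show 2 = 0 + 2 by rfl, Mo_rec, Mo_zero]; norm_num
lemma Mo_three : Mo 3 = 0 := Mo_odd 3 ⟨1, by norm_num⟩
lemma Mo_four : Mo 4 = 3 := by rw [show 4 = 2 + 2 by rfl, Mo_rec, Mo_two]; norm_num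
lemma Mo_five : Mo 5 = 0 := Mo_odd 5 ⟨2, by norm_num⟩
lemma Mo_six : Mo 6 = 15 := by rw [show 6 = 4 + 2 by rfl, Mo_rec, Mo_four]; norm_num
lemma Mo_seven : Mo 7 = 0 := Mo_odd 7 ⟨3, by norm_num⟩
lemma Mo_eight : Mo 8 = 105 := by rw [show 8 = 6 + 2 by rfl, Mo_rec, Mo_six]; norm_num
lemma Mo_nine : Mo 9 = 0 := Mo_odd 9 ⟨4, by norm_num⟩
noncomputable def gpi : Measure ((ℝ × ℝ) × ℝ) :=
  ((gaussianReal 0 1).prod (gaussianReal 0 1)).prod (gaussianReal 0 1)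

lemma integrable_mono_gpi (a b d : ℕ) :
    Integrable (fun z : (ℝ × ℝ) × ℝ => z.1.1 ^ a * z.1.2 ^ b * z.2 ^ d) gpi := by
  exact ((integrable_pow_gaussianReal a).mul_prod (integrable_pow_gaussianReal b)).mul_prod
    (integrable_pow_gaussianReal d)

lemma integral_mono_gpi (a b d : ℕ) :
    ∫ z : (ℝ × ℝ) × ℝ, z.1.1 ^ a * z.1.2 ^ b * z.2 ^ d ∂gpi = Mo a * Mo b * Mo d := by
  rw [gpi, integral_prod_mul (f := fun w : ℝ × ℝ => w.1 ^ a * w.2 ^ b) (g := fun x : ℝ => x ^ d),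
    integral_prod_mul (f := fun x : ℝ => x ^ a) (g := fun x : ℝ => x ^ b)]
  rfl

lemma master {N : ℕ} (c : Fin N → ℝ) (a b d : Fin N → ℕ) :
    ∫ z : (ℝ × ℝ) × ℝ, (∑ i, c i * (z.1.1 ^ a i * z.1.2 ^ b i * z.2 ^ d i)) ∂gpi
      = ∑ i, c i * (Mo (a i) * Mo (b i) * Mo (d i)) := by
  rw [integral_finset_sum]
  · refine Finset.sum_congr rfl fun i _ => ?_
    rw [integral_const_mul, integral_mono_gpi]
  · intro i _
    exact (integrable_mono_gpi (a i) (b i) (d i)).const_mul (c i)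

set_option maxHeartbeats 4000000 in
set_option maxRecDepth 8000 in
/-- For independent standard Gaussians `U, E, F`, if
`Σ_{i=1}^{3} τ_i (U+E)^i + U + F` and `Σ_{i=1}^{3} τ_i (1+U+E)^i + U + F` have the same
distribution, then `τ₁ = τ₂ = τ₃ = 0`. -/
theorem statement7 {Ω : Type*} [MeasurableSpace Ω] (μ : Measure Ω) [IsProbabilityMeasure μ]
    (U E F : Ω → ℝ)
    (hUm : Measurable U) (hEm : Measurable E) (hFm : Measurable F)
    (hindep : iIndepFun ![U, E, F] μ)
    (hU : Measure.map U μ = gaussianReal 0 1)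
    (hE : Measure.map E μ = gaussianReal 0 1)
    (hF : Measure.map F μ = gaussianReal 0 1)
    (τ₁ τ₂ τ₃ : ℝ)
    (hdist :
      Measure.map (fun ω =>
        τ₁ * (U ω + E ω) + τ₂ * (U ω + E ω) ^ 2 + τ₃ * (U ω + E ω) ^ 3 + U ω + F ω) μ =
      Measure.map (fun ω =>
        τ₁ * (1 + U ω + E ω) + τ₂ * (1 + U ω + E ω) ^ 2 + τ₃ * (1 + U ω + E ω) ^ 3
          + U ω + F ω) μ) :
    τ₁ = 0 ∧ τ₂ = 0 ∧ τ₃ = 0 := by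
  have hm : ∀ i, Measurable (![U, E, F] i) := by
    intro i; fin_cases i <;> assumption
  have hUE : IndepFun U E μ := by
    have := hindep.indepFun (show (0 : Fin 3) ≠ 1 by decide)
    simpa using this
  have hUEmap : Measure.map (fun ω => (U ω, E ω)) μ
      = (gaussianReal 0 1).prod (gaussianReal 0 1) := by
    rw [(indepFun_iff_map_prod_eq_prod_map_map hUm.aemeasurable hEm.aemeasurable).mp hUE,
      hU, hE]
  have hUEF : IndepFun (fun ω => (U ω, E ω)) F μ := by
    have := hindep.indepFun_prodMk hm 0 1 2 (by decide) (by decide)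
    simpa using this
  have hmapA : Measure.map (fun ω => ((U ω, E ω), F ω)) μ = gpi := by
    rw [(indepFun_iff_map_prod_eq_prod_map_map
      (hUm.prodMk hEm).aemeasurable hFm.aemeasurable).mp hUEF, hUEmap, hF, gpi]
  have htrans : ∀ g : (ℝ × ℝ) × ℝ → ℝ, Continuous g →
      (∫ ω, g ((U ω, E ω), F ω) ∂μ) = ∫ z, g z ∂gpi := by
    intro g hg
    rw [← hmapA,
      integral_map ((hUm.prodMk hEm).prodMk hFm).aemeasurable hg.aestronglyMeasurable]
  have hXm : Measurable (fun ω => τ₁ * (U ω + E ω) + τ₂ * (U ω + E ω) ^ 2 + τ₃ * (U ω + E ω) ^ 3 + U ω + F ω) := by fun_prop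
  have hYm : Measurable (fun ω => τ₁ * (1 + U ω + E ω) + τ₂ * (1 + U ω + E ω) ^ 2 + τ₃ * (1 + U ω + E ω) ^ 3 + U ω + F ω) := by fun_prop
  have hmom : ∀ n : ℕ,
      (∫ ω, (τ₁ * (U ω + E ω) + τ₂ * (U ω + E ω) ^ 2 + τ₃ * (U ω + E ω) ^ 3 + U ω + F ω) ^ n ∂μ)
        = ∫ ω, (τ₁ * (1 + U ω + E ω) + τ₂ * (1 + U ω + E ω) ^ 2 + τ₃ * (1 + U ω + E ω) ^ 3 + U ω + F ω) ^ n ∂μ := by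
    intro n
    have hpow : Measurable (fun x : ℝ => x ^ n) := by fun_prop
    rw [← integral_map hXm.aemeasurable hpow.aestronglyMeasurable,
        ← integral_map hYm.aemeasurable hpow.aestronglyMeasurable, hdist]
  have hTX1 : (∫ ω, (τ₁ * (U ω + E ω) + τ₂ * (U ω + E ω) ^ 2 + τ₃ * (U ω + E ω) ^ 3 + U ω + F ω) ^ 1 ∂μ)
      = ∫ z : (ℝ × ℝ) × ℝ, (τ₁ * (z.1.1 + z.1.2) + τ₂ * (z.1.1 + z.1.2) ^ 2 + τ₃ * (z.1.1 + z.1.2) ^ 3 + z.1.1 + z.2) ^ 1 ∂gpi :=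
    htrans (fun z : (ℝ × ℝ) × ℝ => (τ₁ * (z.1.1 + z.1.2) + τ₂ * (z.1.1 + z.1.2) ^ 2 + τ₃ * (z.1.1 + z.1.2) ^ 3 + z.1.1 + z.2) ^ 1) (by fun_prop)
  have hTY1 : (∫ ω, (τ₁ * (1 + U ω + E ω) + τ₂ * (1 + U ω + E ω) ^ 2 + τ₃ * (1 + U ω + E ω) ^ 3 + U ω + F ω) ^ 1 ∂μ)
      = ∫ z : (ℝ × ℝ) × ℝ, (τ₁ * (1 + z.1.1 + z.1.2) + τ₂ * (1 + z.1.1 + z.1.2) ^ 2 + τ₃ * (1 + z.1.1 + z.1.2) ^ 3 + z.1.1 + z.2) ^ 1 ∂gpi :=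
    htrans (fun z : (ℝ × ℝ) × ℝ => (τ₁ * (1 + z.1.1 + z.1.2) + τ₂ * (1 + z.1.1 + z.1.2) ^ 2 + τ₃ * (1 + z.1.1 + z.1.2) ^ 3 + z.1.1 + z.2) ^ 1) (by fun_prop)
  have hTX2 : (∫ ω, (τ₁ * (U ω + E ω) + τ₂ * (U ω + E ω) ^ 2 + τ₃ * (U ω + E ω) ^ 3 + U ω + F ω) ^ 2 ∂μ)
      = ∫ z : (ℝ × ℝ) × ℝ, (τ₁ * (z.1.1 + z.1.2) + τ₂ * (z.1.1 + z.1.2) ^ 2 + τ₃ * (z.1.1 + z.1.2) ^ 3 + z.1.1 + z.2) ^ 2 ∂gpi :=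
    htrans (fun z : (ℝ × ℝ) × ℝ => (τ₁ * (z.1.1 + z.1.2) + τ₂ * (z.1.1 + z.1.2) ^ 2 + τ₃ * (z.1.1 + z.1.2) ^ 3 + z.1.1 + z.2) ^ 2) (by fun_prop)
  have hTY2 : (∫ ω, (τ₁ * (1 + U ω + E ω) + τ₂ * (1 + U ω + E ω) ^ 2 + τ₃ * (1 + U ω + E ω) ^ 3 + U ω + F ω) ^ 2 ∂μ)
      = ∫ z : (ℝ × ℝ) × ℝ, (τ₁ * (1 + z.1.1 + z.1.2) + τ₂ * (1 + z.1.1 + z.1.2) ^ 2 + τ₃ * (1 + z.1.1 + z.1.2) ^ 3 + z.1.1 + z.2) ^ 2 ∂gpi :=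
    htrans (fun z : (ℝ × ℝ) × ℝ => (τ₁ * (1 + z.1.1 + z.1.2) + τ₂ * (1 + z.1.1 + z.1.2) ^ 2 + τ₃ * (1 + z.1.1 + z.1.2) ^ 3 + z.1.1 + z.2) ^ 2) (by fun_prop)
  have hTX3 : (∫ ω, (τ₁ * (U ω + E ω) + τ₂ * (U ω + E ω) ^ 2 + τ₃ * (U ω + E ω) ^ 3 + U ω + F ω) ^ 3 ∂μ)
      = ∫ z : (ℝ × ℝ) × ℝ, (τ₁ * (z.1.1 + z.1.2) + τ₂ * (z.1.1 + z.1.2) ^ 2 + τ₃ * (z.1.1 + z.1.2) ^ 3 + z.1.1 + z.2) ^ 3 ∂gpi :=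
    htrans (fun z : (ℝ × ℝ) × ℝ => (τ₁ * (z.1.1 + z.1.2) + τ₂ * (z.1.1 + z.1.2) ^ 2 + τ₃ * (z.1.1 + z.1.2) ^ 3 + z.1.1 + z.2) ^ 3) (by fun_prop)
  have hTY3 : (∫ ω, (τ₁ * (1 + U ω + E ω) + τ₂ * (1 + U ω + E ω) ^ 2 + τ₃ * (1 + U ω + E ω) ^ 3 + U ω + F ω) ^ 3 ∂μ)
      = ∫ z : (ℝ × ℝ) × ℝ, (τ₁ * (1 + z.1.1 + z.1.2) + τ₂ * (1 + z.1.1 + z.1.2) ^ 2 + τ₃ * (1 + z.1.1 + z.1.2) ^ 3 + z.1.1 + z.2) ^ 3 ∂gpi :=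
    htrans (fun z : (ℝ × ℝ) × ℝ => (τ₁ * (1 + z.1.1 + z.1.2) + τ₂ * (1 + z.1.1 + z.1.2) ^ 2 + τ₃ * (1 + z.1.1 + z.1.2) ^ 3 + z.1.1 + z.2) ^ 3) (by fun_prop)
  have hIX1 : (∫ z : (ℝ × ℝ) × ℝ, (τ₁ * (z.1.1 + z.1.2) + τ₂ * (z.1.1 + z.1.2) ^ 2 + τ₃ * (z.1.1 + z.1.2) ^ 3 + z.1.1 + z.2) ^ 1 ∂gpi) = ((2)*τ₂ : ℝ) := by
    have hexp : (fun z : (ℝ × ℝ) × ℝ => (τ₁ * (z.1.1 + z.1.2) + τ₂ * (z.1.1 + z.1.2) ^ 2 + τ₃ * (z.1.1 + z.1.2) ^ 3 + z.1.1 + z.2) ^ 1)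
        = fun z : (ℝ × ℝ) × ℝ => ∑ i : Fin 10,
            ![((1) : ℝ), (τ₁ : ℝ), (τ₂ : ℝ), (τ₃ : ℝ), ((1) + τ₁ : ℝ), ((2)*τ₂ : ℝ), ((3)*τ₃ : ℝ), (τ₂ : ℝ), ((3)*τ₃ : ℝ), (τ₃ : ℝ)] i * (z.1.1 ^ (![0, 0, 0, 0, 1, 1, 1, 2, 2, 3] : Fin 10 → ℕ) i * z.1.2 ^ (![0, 1, 2, 3, 0, 1, 2, 0, 1, 0] : Fin 10 → ℕ) i * z.2 ^ (![1, 0, 0, 0, 0, 0, 0, 0, 0, 0] : Fin 10 → ℕ) i) := by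
      funext z
      simp only [Fin.sum_univ_succ, Fin.sum_univ_zero, Matrix.cons_val_zero, Matrix.cons_val_succ]
      ring
    rw [hexp, master]
    simp only [Fin.sum_univ_succ, Fin.sum_univ_zero, Matrix.cons_val_zero, Matrix.cons_val_succ,
      Mo_zero, Mo_one, Mo_two, Mo_three, Mo_four, Mo_five, Mo_six, Mo_seven, Mo_eight, Mo_nine]
    ring
  have hIY1 : (∫ z : (ℝ × ℝ) × ℝ, (τ₁ * (1 + z.1.1 + z.1.2) + τ₂ * (1 + z.1.1 + z.1.2) ^ 2 + τ₃ * (1 + z.1.1 + z.1.2) ^ 3 + z.1.1 + z.2) ^ 1 ∂gpi) = ((7)*τ₃ + (3)*τ₂ + τ₁ : ℝ) := by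
    have hexp : (fun z : (ℝ × ℝ) × ℝ => (τ₁ * (1 + z.1.1 + z.1.2) + τ₂ * (1 + z.1.1 + z.1.2) ^ 2 + τ₃ * (1 + z.1.1 + z.1.2) ^ 3 + z.1.1 + z.2) ^ 1)
        = fun z : (ℝ × ℝ) × ℝ => ∑ i : Fin 11,
            ![(τ₃ + τ₂ + τ₁ : ℝ), ((1) : ℝ), ((3)*τ₃ + (2)*τ₂ + τ₁ : ℝ), ((3)*τ₃ + τ₂ : ℝ), (τ₃ : ℝ), ((1) + (3)*τ₃ + (2)*τ₂ + τ₁ : ℝ), ((6)*τ₃ + (2)*τ₂ : ℝ), ((3)*τ₃ : ℝ), ((3)*τ₃ + τ₂ : ℝ), ((3)*τ₃ : ℝ), (τ₃ : ℝ)] i * (z.1.1 ^ (![0, 0, 0, 0, 0, 1, 1, 1, 2, 2, 3] : Fin 11 → ℕ) i * z.1.2 ^ (![0, 0, 1, 2, 3, 0, 1, 2, 0, 1, 0] : Fin 11 → ℕ) i * z.2 ^ (![0, 1, 0, 0, 0, 0, 0, 0, 0, 0, 0] : Fin 11 → ℕ) i) := by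
      funext z
      simp only [Fin.sum_univ_succ, Fin.sum_univ_zero, Matrix.cons_val_zero, Matrix.cons_val_succ]
      ring
    rw [hexp, master]
    simp only [Fin.sum_univ_succ, Fin.sum_univ_zero, Matrix.cons_val_zero, Matrix.cons_val_succ,
      Mo_zero, Mo_one, Mo_two, Mo_three, Mo_four, Mo_five, Mo_six, Mo_seven, Mo_eight, Mo_nine]
    ring
  have hIX2 : (∫ z : (ℝ × ℝ) × ℝ, (τ₁ * (z.1.1 + z.1.2) + τ₂ * (z.1.1 + z.1.2) ^ 2 + τ₃ * (z.1.1 + z.1.2) ^ 3 + z.1.1 + z.2) ^ 2 ∂gpi) = ((2) + (12)*τ₃ + (120)*τ₃^2 + (12)*τ₂^2 + (2)*τ₁ + (24)*τ₁*τ₃ + (2)*τ₁^2 : ℝ) := by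
    have hexp : (fun z : (ℝ × ℝ) × ℝ => (τ₁ * (z.1.1 + z.1.2) + τ₂ * (z.1.1 + z.1.2) ^ 2 + τ₃ * (z.1.1 + z.1.2) ^ 3 + z.1.1 + z.2) ^ 2)
        = fun z : (ℝ × ℝ) × ℝ => ∑ i : Fin 35,
            ![((1) : ℝ), ((2)*τ₁ : ℝ), (τ₁^2 : ℝ), ((2)*τ₂ : ℝ), ((2)*τ₁*τ₂ : ℝ), ((2)*τ₃ : ℝ), (τ₂^2 + (2)*τ₁*τ₃ : ℝ), ((2)*τ₂*τ₃ : ℝ), (τ₃^2 : ℝ), ((2) + (2)*τ₁ : ℝ), ((2)*τ₁ + (2)*τ₁^2 : ℝ), ((4)*τ₂ : ℝ), ((2)*τ₂ + (6)*τ₁*τ₂ : ℝ), ((6)*τ₃ : ℝ), ((2)*τ₃ + (4)*τ₂^2 + (8)*τ₁*τ₃ : ℝ), ((10)*τ₂*τ₃ : ℝ), ((6)*τ₃^2 : ℝ), ((1) + (2)*τ₁ + τ₁^2 : ℝ), ((2)*τ₂ : ℝ), ((4)*τ₂ + (6)*τ₁*τ₂ : ℝ), ((6)*τ₃ : ℝ),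 ((6)*τ₃ + (6)*τ₂^2 + (12)*τ₁*τ₃ : ℝ), ((20)*τ₂*τ₃ : ℝ), ((15)*τ₃^2 : ℝ), ((2)*τ₂ + (2)*τ₁*τ₂ : ℝ), ((2)*τ₃ : ℝ), ((6)*τ₃ + (4)*τ₂^2 + (8)*τ₁*τ₃ : ℝ), ((20)*τ₂*τ₃ : ℝ), ((20)*τ₃^2 : ℝ), ((2)*τ₃ + τ₂^2 + (2)*τ₁*τ₃ : ℝ), ((10)*τ₂*τ₃ : ℝ), ((15)*τ₃^2 : ℝ), ((2)*τ₂*τ₃ : ℝ), ((6)*τ₃^2 : ℝ), (τ₃^2 : ℝ)] i * (z.1.1 ^ (![0, 0, 0, 0, 0, 0, 0, 0, 0, 1, 1, 1, 1, 1, 1, 1, 1, 2, 2, 2, 2, 2, 2, 2, 3, 3, 3, 3, 3, 4, 4, 4, 5, 5, 6] : Fin 35 → ℕ) i * z.1.2 ^ (![0, 1, 2, 2, 3, 3, 4, 5, 6, 0, 1, 1, 2, 2, 3, 4, 5, 0, 0, 1, 1, 2, 3, 4, 0, 0, 1, 2, 3, 0, 1, 2, 0, 1, 0] : Fin 35 →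 ℕ) i * z.2 ^ (![2, 1, 0, 1, 0, 1, 0, 0, 0, 1, 0, 1, 0, 1, 0, 0, 0, 0, 1, 0, 1, 0, 0, 0, 0, 1, 0, 0, 0, 0, 0, 0, 0, 0, 0] : Fin 35 → ℕ) i) := by
      funext z
      simp only [Fin.sum_univ_succ, Fin.sum_univ_zero, Matrix.cons_val_zero, Matrix.cons_val_succ]
      ring
    rw [hexp, master]
    simp only [Fin.sum_univ_succ, Fin.sum_univ_zero, Matrix.cons_val_zero, Matrix.cons_val_succ,
      Mo_zero, Mo_one, Mo_two, Mo_three, Mo_four, Mo_five, Mo_six, Mo_seven, Mo_eight, Mo_nine]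
    ring
  have hIY2 : (∫ z : (ℝ × ℝ) × ℝ, (τ₁ * (1 + z.1.1 + z.1.2) + τ₂ * (1 + z.1.1 + z.1.2) ^ 2 + τ₃ * (1 + z.1.1 + z.1.2) ^ 3 + z.1.1 + z.2) ^ 2 ∂gpi) = ((2) + (18)*τ₃ + (331)*τ₃^2 + (4)*τ₂ + (162)*τ₂*τ₃ + (25)*τ₂^2 + (2)*τ₁ + (50)*τ₁*τ₃ + (14)*τ₁*τ₂ + (3)*τ₁^2 : ℝ) := by
    have hexp : (fun z : (ℝ × ℝ) × ℝ => (τ₁ * (1 + z.1.1 + z.1.2) + τ₂ * (1 + z.1.1 + z.1.2) ^ 2 + τ₃ * (1 + z.1.1 + z.1.2) ^ 3 + z.1.1 + z.2) ^ 2)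
        = fun z : (ℝ × ℝ) × ℝ => ∑ i : Fin 39,
            ![(τ₃^2 + (2)*τ₂*τ₃ + τ₂^2 + (2)*τ₁*τ₃ + (2)*τ₁*τ₂ + τ₁^2 : ℝ), ((2)*τ₃ + (2)*τ₂ + (2)*τ₁ : ℝ), ((1) : ℝ), ((6)*τ₃^2 + (10)*τ₂*τ₃ + (4)*τ₂^2 + (8)*τ₁*τ₃ + (6)*τ₁*τ₂ + (2)*τ₁^2 : ℝ), ((6)*τ₃ + (4)*τ₂ + (2)*τ₁ : ℝ), ((15)*τ₃^2 + (20)*τ₂*τ₃ + (6)*τ₂^2 + (12)*τ₁*τ₃ + (6)*τ₁*τ₂ + τ₁^2 : ℝ), ((6)*τ₃ + (2)*τ₂ : ℝ), ((20)*τ₃^2 + (20)*τ₂*τ₃ + (4)*τ₂^2 + (8)*τ₁*τ₃ + (2)*τ₁*τ₂ : ℝ), ((2)*τ₃ : ℝ), ((15)*τ₃^2 + (10)*τ₂*τ₃ + τ₂^2 + (2)*τ₁*τ₃ : ℝ), ((6)*τ₃^2 + (2)*τ₂*τ₃ : ℝ), (τ₃^2 : ℝ), ((2)*τ₃ + (6)*τ₃^2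 + (2)*τ₂ + (10)*τ₂*τ₃ + (4)*τ₂^2 + (2)*τ₁ + (8)*τ₁*τ₃ + (6)*τ₁*τ₂ + (2)*τ₁^2 : ℝ), ((2) + (6)*τ₃ + (4)*τ₂ + (2)*τ₁ : ℝ), ((6)*τ₃ + (30)*τ₃^2 + (4)*τ₂ + (40)*τ₂*τ₃ + (12)*τ₂^2 + (2)*τ₁ + (24)*τ₁*τ₃ + (12)*τ₁*τ₂ + (2)*τ₁^2 : ℝ), ((12)*τ₃ + (4)*τ₂ : ℝ), ((6)*τ₃ + (60)*τ₃^2 + (2)*τ₂ + (60)*τ₂*τ₃ + (12)*τ₂^2 + (24)*τ₁*τ₃ + (6)*τ₁*τ₂ : ℝ), ((6)*τ₃ : ℝ), ((2)*τ₃ + (60)*τ₃^2 + (40)*τ₂*τ₃ + (4)*τ₂^2 + (8)*τ₁*τ₃ : ℝ), ((30)*τ₃^2 + (10)*τ₂*τ₃ : ℝ), ((6)*τ₃^2 : ℝ), ((1) + (6)*τ₃ + (15)*τ₃^2 + (4)*τ₂ + (20)*τ₂*τ₃ + (6)*τ₂^2 + (2)*τ₁ + (12)*τ₁*τ₃ +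 (6)*τ₁*τ₂ + τ₁^2 : ℝ), ((6)*τ₃ + (2)*τ₂ : ℝ), ((12)*τ₃ + (60)*τ₃^2 + (4)*τ₂ + (60)*τ₂*τ₃ + (12)*τ₂^2 + (24)*τ₁*τ₃ + (6)*τ₁*τ₂ : ℝ), ((6)*τ₃ : ℝ), ((6)*τ₃ + (90)*τ₃^2 + (60)*τ₂*τ₃ + (6)*τ₂^2 + (12)*τ₁*τ₃ : ℝ), ((60)*τ₃^2 + (20)*τ₂*τ₃ : ℝ), ((15)*τ₃^2 : ℝ), ((6)*τ₃ + (20)*τ₃^2 + (2)*τ₂ + (20)*τ₂*τ₃ + (4)*τ₂^2 + (8)*τ₁*τ₃ + (2)*τ₁*τ₂ : ℝ), ((2)*τ₃ : ℝ), ((6)*τ₃ + (60)*τ₃^2 + (40)*τ₂*τ₃ + (4)*τ₂^2 + (8)*τ₁*τ₃ : ℝ), ((60)*τ₃^2 + (20)*τ₂*τ₃ : ℝ), ((20)*τ₃^2 : ℝ), ((2)*τ₃ + (15)*τ₃^2 + (10)*τ₂*τ₃ + τ₂^2 + (2)*τ₁*τ₃ : ℝ), ((30)*τ₃^2 + (10)*τ₂*τ₃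 : ℝ), ((15)*τ₃^2 : ℝ), ((6)*τ₃^2 + (2)*τ₂*τ₃ : ℝ), ((6)*τ₃^2 : ℝ), (τ₃^2 : ℝ)] i * (z.1.1 ^ (![0, 0, 0, 0, 0, 0, 0, 0, 0, 0, 0, 0, 1, 1, 1, 1, 1, 1, 1, 1, 1, 2, 2, 2, 2, 2, 2, 2, 3, 3, 3, 3, 3, 4, 4, 4, 5, 5, 6] : Fin 39 → ℕ) i * z.1.2 ^ (![0, 0, 0, 1, 1, 2, 2, 3, 3, 4, 5, 6, 0, 0, 1, 1, 2, 2, 3, 4, 5, 0, 0, 1, 1, 2, 3, 4, 0, 0, 1, 2, 3, 0, 1, 2, 0, 1, 0] : Fin 39 → ℕ) i * z.2 ^ (![0, 1, 2, 0, 1, 0, 1, 0, 1, 0, 0, 0, 0, 1, 0, 1, 0, 1, 0, 0, 0, 0, 1, 0, 1, 0, 0, 0, 0, 1, 0, 0, 0, 0, 0, 0, 0, 0, 0] : Fin 39 → ℕ) i) := by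
      funext z
      simp only [Fin.sum_univ_succ, Fin.sum_univ_zero, Matrix.cons_val_zero, Matrix.cons_val_succ]
      ring
    rw [hexp, master]
    simp only [Fin.sum_univ_succ, Fin.sum_univ_zero, Matrix.cons_val_zero, Matrix.cons_val_succ,
      Mo_zero, Mo_one, Mo_two, Mo_three, Mo_four, Mo_five, Mo_six, Mo_seven, Mo_eight, Mo_nine]
    ring
  have hIX3 : (∫ z : (ℝ × ℝ) × ℝ, (τ₁ * (z.1.1 + z.1.2) + τ₂ * (z.1.1 + z.1.2) ^ 2 + τ₃ * (z.1.1 + z.1.2) ^ 3 + z.1.1 + z.2) ^ 3 ∂gpi) = ((18)*τ₂ + (360)*τ₂*τ₃ + (5040)*τ₂*τ₃^2 + (120)*τ₂^3 + (36)*τ₁*τ₂ + (720)*τ₁*τ₂*τ₃ + (36)*τ₁^2*τ₂ : ℝ) := by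
    have hexp : (fun z : (ℝ × ℝ) × ℝ => (τ₁ * (z.1.1 + z.1.2) + τ₂ * (z.1.1 + z.1.2) ^ 2 + τ₃ * (z.1.1 + z.1.2) ^ 3 + z.1.1 + z.2) ^ 3)
        = fun z : (ℝ × ℝ) × ℝ => ∑ i : Fin 84,
            ![((1) : ℝ), ((3)*τ₁ : ℝ), ((3)*τ₁^2 : ℝ), ((3)*τ₂ : ℝ), (τ₁^3 : ℝ), ((6)*τ₁*τ₂ : ℝ), ((3)*τ₃ : ℝ), ((3)*τ₁^2*τ₂ : ℝ), ((3)*τ₂^2 + (6)*τ₁*τ₃ : ℝ), ((3)*τ₁*τ₂^2 + (3)*τ₁^2*τ₃ : ℝ), ((6)*τ₂*τ₃ : ℝ), (τ₂^3 + (6)*τ₁*τ₂*τ₃ : ℝ), ((3)*τ₃^2 : ℝ), ((3)*τ₂^2*τ₃ + (3)*τ₁*τ₃^2 : ℝ), ((3)*τ₂*τ₃^2 : ℝ), (τ₃^3 : ℝ), ((3) + (3)*τ₁ : ℝ), ((6)*τ₁ + (6)*τ₁^2 : ℝ), ((6)*τ₂ : ℝ), ((3)*τ₁^2 + (3)*τ₁^3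 : ℝ), ((6)*τ₂ + (18)*τ₁*τ₂ : ℝ), ((9)*τ₃ : ℝ), ((6)*τ₁*τ₂ + (12)*τ₁^2*τ₂ : ℝ), ((6)*τ₃ + (12)*τ₂^2 + (24)*τ₁*τ₃ : ℝ), ((3)*τ₂^2 + (6)*τ₁*τ₃ + (15)*τ₁*τ₂^2 + (15)*τ₁^2*τ₃ : ℝ), ((30)*τ₂*τ₃ : ℝ), ((6)*τ₂*τ₃ + (6)*τ₂^3 + (36)*τ₁*τ₂*τ₃ : ℝ), ((18)*τ₃^2 : ℝ), ((3)*τ₃^2 + (21)*τ₂^2*τ₃ + (21)*τ₁*τ₃^2 : ℝ), ((24)*τ₂*τ₃^2 : ℝ), ((9)*τ₃^3 : ℝ), ((3) + (6)*τ₁ + (3)*τ₁^2 : ℝ), ((3)*τ₂ : ℝ), ((3)*τ₁ + (6)*τ₁^2 + (3)*τ₁^3 : ℝ), ((12)*τ₂ + (18)*τ₁*τ₂ : ℝ), ((9)*τ₃ : ℝ), ((3)*τ₂ + (18)*τ₁*τ₂ + (18)*τ₁^2*τ₂ : ℝ), ((18)*τ₃ + (18)*τ₂^2 + (36)*τ₁*τ₃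 : ℝ), ((3)*τ₃ + (12)*τ₂^2 + (24)*τ₁*τ₃ + (30)*τ₁*τ₂^2 + (30)*τ₁^2*τ₃ : ℝ), ((60)*τ₂*τ₃ : ℝ), ((30)*τ₂*τ₃ + (15)*τ₂^3 + (90)*τ₁*τ₂*τ₃ : ℝ), ((45)*τ₃^2 : ℝ), ((18)*τ₃^2 + (63)*τ₂^2*τ₃ + (63)*τ₁*τ₃^2 : ℝ), ((84)*τ₂*τ₃^2 : ℝ), ((36)*τ₃^3 : ℝ), ((1) + (3)*τ₁ + (3)*τ₁^2 + τ₁^3 : ℝ), ((6)*τ₂ + (6)*τ₁*τ₂ : ℝ), ((3)*τ₃ : ℝ), ((6)*τ₂ + (18)*τ₁*τ₂ + (12)*τ₁^2*τ₂ : ℝ), ((18)*τ₃ + (12)*τ₂^2 + (24)*τ₁*τ₃ : ℝ), ((9)*τ₃ + (18)*τ₂^2 + (36)*τ₁*τ₃ + (30)*τ₁*τ₂^2 + (30)*τ₁^2*τ₃ : ℝ), ((60)*τ₂*τ₃ : ℝ), ((60)*τ₂*τ₃ + (20)*τ₂^3 + (120)*τ₁*τ₂*τ₃ : ℝ), ((60)*τ₃^2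 : ℝ), ((45)*τ₃^2 + (105)*τ₂^2*τ₃ + (105)*τ₁*τ₃^2 : ℝ), ((168)*τ₂*τ₃^2 : ℝ), ((84)*τ₃^3 : ℝ), ((3)*τ₂ + (6)*τ₁*τ₂ + (3)*τ₁^2*τ₂ : ℝ), ((6)*τ₃ + (3)*τ₂^2 + (6)*τ₁*τ₃ : ℝ), ((9)*τ₃ + (12)*τ₂^2 + (24)*τ₁*τ₃ + (15)*τ₁*τ₂^2 + (15)*τ₁^2*τ₃ : ℝ), ((30)*τ₂*τ₃ : ℝ), ((60)*τ₂*τ₃ + (15)*τ₂^3 + (90)*τ₁*τ₂*τ₃ : ℝ), ((45)*τ₃^2 : ℝ), ((60)*τ₃^2 + (105)*τ₂^2*τ₃ + (105)*τ₁*τ₃^2 : ℝ), ((210)*τ₂*τ₃^2 : ℝ), ((126)*τ₃^3 : ℝ), ((3)*τ₃ + (3)*τ₂^2 + (6)*τ₁*τ₃ + (3)*τ₁*τ₂^2 + (3)*τ₁^2*τ₃ : ℝ), ((6)*τ₂*τ₃ : ℝ), ((30)*τ₂*τ₃ + (6)*τ₂^3 + (36)*τ₁*τ₂*τ₃ : ℝ),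 ((18)*τ₃^2 : ℝ), ((45)*τ₃^2 + (63)*τ₂^2*τ₃ + (63)*τ₁*τ₃^2 : ℝ), ((168)*τ₂*τ₃^2 : ℝ), ((126)*τ₃^3 : ℝ), ((6)*τ₂*τ₃ + τ₂^3 + (6)*τ₁*τ₂*τ₃ : ℝ), ((3)*τ₃^2 : ℝ), ((18)*τ₃^2 + (21)*τ₂^2*τ₃ + (21)*τ₁*τ₃^2 : ℝ), ((84)*τ₂*τ₃^2 : ℝ), ((84)*τ₃^3 : ℝ), ((3)*τ₃^2 + (3)*τ₂^2*τ₃ + (3)*τ₁*τ₃^2 : ℝ), ((24)*τ₂*τ₃^2 : ℝ), ((36)*τ₃^3 : ℝ), ((3)*τ₂*τ₃^2 : ℝ), ((9)*τ₃^3 : ℝ), (τ₃^3 : ℝ)] i * (z.1.1 ^ (![0, 0, 0, 0, 0, 0, 0, 0, 0, 0, 0, 0, 0, 0, 0, 0, 1, 1, 1, 1, 1, 1, 1, 1, 1, 1, 1, 1, 1, 1, 1, 2, 2, 2, 2, 2, 2, 2, 2, 2, 2, 2, 2, 2, 2, 3, 3, 3, 3, 3, 3, 3, 3, 3, 3, 3,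 3, 4, 4, 4, 4, 4, 4, 4, 4, 4, 5, 5, 5, 5, 5, 5, 5, 6, 6, 6, 6, 6, 7, 7, 7, 8, 8, 9] : Fin 84 → ℕ) i * z.1.2 ^ (![0, 1, 2, 2, 3, 3, 3, 4, 4, 5, 5, 6, 6, 7, 8, 9, 0, 1, 1, 2, 2, 2, 3, 3, 4, 4, 5, 5, 6, 7, 8, 0, 0, 1, 1, 1, 2, 2, 3, 3, 4, 4, 5, 6, 7, 0, 0, 0, 1, 1, 2, 2, 3, 3, 4, 5, 6, 0, 0, 1, 1, 2, 2, 3, 4, 5, 0, 0, 1, 1, 2, 3, 4, 0, 0, 1, 2, 3, 0, 1, 2, 0, 1, 0] : Fin 84 → ℕ) i * z.2 ^ (![3, 2, 1, 2, 0, 1, 2, 0, 1, 0, 1, 0, 1, 0, 0, 0, 2, 1, 2, 0, 1, 2, 0, 1, 0, 1, 0, 1, 0, 0, 0, 1, 2, 0, 1, 2, 0, 1, 0, 1, 0, 1, 0, 0, 0, 0, 1, 2, 0, 1, 0, 1, 0, 1, 0, 0, 0, 0, 1, 0, 1, 0, 1, 0, 0, 0, 0, 1, 0, 1, 0, 0,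 0, 0, 1, 0, 0, 0, 0, 0, 0, 0, 0, 0] : Fin 84 → ℕ) i) := by
      funext z
      simp only [Fin.sum_univ_succ, Fin.sum_univ_zero, Matrix.cons_val_zero, Matrix.cons_val_succ]
      ring
    rw [hexp, master]
    simp only [Fin.sum_univ_succ, Fin.sum_univ_zero, Matrix.cons_val_zero, Matrix.cons_val_succ,
      Mo_zero, Mo_one, Mo_two, Mo_three, Mo_four, Mo_five, Mo_six, Mo_seven, Mo_eight, Mo_nine]
    ring
  have hIY3 : (∫ z : (ℝ × ℝ) × ℝ, (τ₁ * (1 + z.1.1 + z.1.2) + τ₂ * (1 + z.1.1 + z.1.2) ^ 2 + τ₃ * (1 + z.1.1 + z.1.2) ^ 3 + z.1.1 + z.2) ^ 3 ∂gpi) = ((60)*τ₃ + (1458)*τ₃^2 + (26785)*τ₃^3 + (24)*τ₂ + (750)*τ₂*τ₃ + (17811)*τ₂*τ₃^2 + (84)*τ₂^2 + (3909)*τ₂^2*τ₃ + (331)*τ₂^3 + (6)*τ₁ + (168)*τ₁*τ₃ + (3909)*τ₁*τ₃^2 + (54)*τ₁*τ₂ + (1986)*τ₁*τ₂*τ₃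 + (243)*τ₁*τ₂^2 + (6)*τ₁^2 + (243)*τ₁^2*τ₃ + (75)*τ₁^2*τ₂ + (7)*τ₁^3 : ℝ) := by
    have hexp : (fun z : (ℝ × ℝ) × ℝ => (τ₁ * (1 + z.1.1 + z.1.2) + τ₂ * (1 + z.1.1 + z.1.2) ^ 2 + τ₃ * (1 + z.1.1 + z.1.2) ^ 3 + z.1.1 + z.2) ^ 3)
        = fun z : (ℝ × ℝ) × ℝ => ∑ i : Fin 94,
            ![(τ₃^3 + (3)*τ₂*τ₃^2 + (3)*τ₂^2*τ₃ + τ₂^3 + (3)*τ₁*τ₃^2 + (6)*τ₁*τ₂*τ₃ + (3)*τ₁*τ₂^2 + (3)*τ₁^2*τ₃ + (3)*τ₁^2*τ₂ + τ₁^3 : ℝ), ((3)*τ₃^2 + (6)*τ₂*τ₃ + (3)*τ₂^2 + (6)*τ₁*τ₃ + (6)*τ₁*τ₂ + (3)*τ₁^2 : ℝ), ((3)*τ₃ + (3)*τ₂ + (3)*τ₁ : ℝ), ((1) : ℝ), ((9)*τ₃^3 + (24)*τ₂*τ₃^2 + (21)*τ₂^2*τ₃ + (6)*τ₂^3 + (21)*τ₁*τ₃^2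 + (36)*τ₁*τ₂*τ₃ + (15)*τ₁*τ₂^2 + (15)*τ₁^2*τ₃ + (12)*τ₁^2*τ₂ + (3)*τ₁^3 : ℝ), ((18)*τ₃^2 + (30)*τ₂*τ₃ + (12)*τ₂^2 + (24)*τ₁*τ₃ + (18)*τ₁*τ₂ + (6)*τ₁^2 : ℝ), ((9)*τ₃ + (6)*τ₂ + (3)*τ₁ : ℝ), ((36)*τ₃^3 + (84)*τ₂*τ₃^2 + (63)*τ₂^2*τ₃ + (15)*τ₂^3 + (63)*τ₁*τ₃^2 + (90)*τ₁*τ₂*τ₃ + (30)*τ₁*τ₂^2 + (30)*τ₁^2*τ₃ + (18)*τ₁^2*τ₂ + (3)*τ₁^3 : ℝ), ((45)*τ₃^2 + (60)*τ₂*τ₃ + (18)*τ₂^2 + (36)*τ₁*τ₃ + (18)*τ₁*τ₂ + (3)*τ₁^2 : ℝ), ((9)*τ₃ + (3)*τ₂ : ℝ), ((84)*τ₃^3 + (168)*τ₂*τ₃^2 + (105)*τ₂^2*τ₃ + (20)*τ₂^3 + (105)*τ₁*τ₃^2 + (120)*τ₁*τ₂*τ₃ + (30)*τ₁*τ₂^2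 + (30)*τ₁^2*τ₃ + (12)*τ₁^2*τ₂ + τ₁^3 : ℝ), ((60)*τ₃^2 + (60)*τ₂*τ₃ + (12)*τ₂^2 + (24)*τ₁*τ₃ + (6)*τ₁*τ₂ : ℝ), ((3)*τ₃ : ℝ), ((126)*τ₃^3 + (210)*τ₂*τ₃^2 + (105)*τ₂^2*τ₃ + (15)*τ₂^3 + (105)*τ₁*τ₃^2 + (90)*τ₁*τ₂*τ₃ + (15)*τ₁*τ₂^2 + (15)*τ₁^2*τ₃ + (3)*τ₁^2*τ₂ : ℝ), ((45)*τ₃^2 + (30)*τ₂*τ₃ + (3)*τ₂^2 + (6)*τ₁*τ₃ : ℝ), ((126)*τ₃^3 + (168)*τ₂*τ₃^2 + (63)*τ₂^2*τ₃ + (6)*τ₂^3 + (63)*τ₁*τ₃^2 + (36)*τ₁*τ₂*τ₃ + (3)*τ₁*τ₂^2 + (3)*τ₁^2*τ₃ : ℝ), ((18)*τ₃^2 + (6)*τ₂*τ₃ : ℝ), ((84)*τ₃^3 + (84)*τ₂*τ₃^2 + (21)*τ₂^2*τ₃ + τ₂^3 + (21)*τ₁*τ₃^2 + (6)*τ₁*τ₂*τ₃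 : ℝ), ((3)*τ₃^2 : ℝ), ((36)*τ₃^3 + (24)*τ₂*τ₃^2 + (3)*τ₂^2*τ₃ + (3)*τ₁*τ₃^2 : ℝ), ((9)*τ₃^3 + (3)*τ₂*τ₃^2 : ℝ), (τ₃^3 : ℝ), ((3)*τ₃^2 + (9)*τ₃^3 + (6)*τ₂*τ₃ + (24)*τ₂*τ₃^2 + (3)*τ₂^2 + (21)*τ₂^2*τ₃ + (6)*τ₂^3 + (6)*τ₁*τ₃ + (21)*τ₁*τ₃^2 + (6)*τ₁*τ₂ + (36)*τ₁*τ₂*τ₃ + (15)*τ₁*τ₂^2 + (3)*τ₁^2 + (15)*τ₁^2*τ₃ + (12)*τ₁^2*τ₂ + (3)*τ₁^3 : ℝ), ((6)*τ₃ + (18)*τ₃^2 + (6)*τ₂ + (30)*τ₂*τ₃ + (12)*τ₂^2 + (6)*τ₁ + (24)*τ₁*τ₃ + (18)*τ₁*τ₂ + (6)*τ₁^2 : ℝ), ((3) + (9)*τ₃ + (6)*τ₂ + (3)*τ₁ : ℝ), ((18)*τ₃^2 + (72)*τ₃^3 + (30)*τ₂*τ₃ + (168)*τ₂*τ₃^2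 + (12)*τ₂^2 + (126)*τ₂^2*τ₃ + (30)*τ₂^3 + (24)*τ₁*τ₃ + (126)*τ₁*τ₃^2 + (18)*τ₁*τ₂ + (180)*τ₁*τ₂*τ₃ + (60)*τ₁*τ₂^2 + (6)*τ₁^2 + (60)*τ₁^2*τ₃ + (36)*τ₁^2*τ₂ + (6)*τ₁^3 : ℝ), ((18)*τ₃ + (90)*τ₃^2 + (12)*τ₂ + (120)*τ₂*τ₃ + (36)*τ₂^2 + (6)*τ₁ + (72)*τ₁*τ₃ + (36)*τ₁*τ₂ + (6)*τ₁^2 : ℝ), ((18)*τ₃ + (6)*τ₂ : ℝ), ((45)*τ₃^2 + (252)*τ₃^3 + (60)*τ₂*τ₃ + (504)*τ₂*τ₃^2 + (18)*τ₂^2 + (315)*τ₂^2*τ₃ + (60)*τ₂^3 + (36)*τ₁*τ₃ + (315)*τ₁*τ₃^2 + (18)*τ₁*τ₂ + (360)*τ₁*τ₂*τ₃ + (90)*τ₁*τ₂^2 + (3)*τ₁^2 + (90)*τ₁^2*τ₃ + (36)*τ₁^2*τ₂ + (3)*τ₁^3 : ℝ), ((18)*τ₃ + (180)*τ₃^2 +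 (6)*τ₂ + (180)*τ₂*τ₃ + (36)*τ₂^2 + (72)*τ₁*τ₃ + (18)*τ₁*τ₂ : ℝ), ((9)*τ₃ : ℝ), ((60)*τ₃^2 + (504)*τ₃^3 + (60)*τ₂*τ₃ + (840)*τ₂*τ₃^2 + (12)*τ₂^2 + (420)*τ₂^2*τ₃ + (60)*τ₂^3 + (24)*τ₁*τ₃ + (420)*τ₁*τ₃^2 + (6)*τ₁*τ₂ + (360)*τ₁*τ₂*τ₃ + (60)*τ₁*τ₂^2 + (60)*τ₁^2*τ₃ + (12)*τ₁^2*τ₂ : ℝ), ((6)*τ₃ + (180)*τ₃^2 + (120)*τ₂*τ₃ + (12)*τ₂^2 + (24)*τ₁*τ₃ : ℝ), ((45)*τ₃^2 + (630)*τ₃^3 + (30)*τ₂*τ₃ + (840)*τ₂*τ₃^2 + (3)*τ₂^2 + (315)*τ₂^2*τ₃ + (30)*τ₂^3 + (6)*τ₁*τ₃ + (315)*τ₁*τ₃^2 + (180)*τ₁*τ₂*τ₃ + (15)*τ₁*τ₂^2 + (15)*τ₁^2*τ₃ : ℝ), ((90)*τ₃^2 + (30)*τ₂*τ₃ : ℝ),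 ((18)*τ₃^2 + (504)*τ₃^3 + (6)*τ₂*τ₃ + (504)*τ₂*τ₃^2 + (126)*τ₂^2*τ₃ + (6)*τ₂^3 + (126)*τ₁*τ₃^2 + (36)*τ₁*τ₂*τ₃ : ℝ), ((18)*τ₃^2 : ℝ), ((3)*τ₃^2 + (252)*τ₃^3 + (168)*τ₂*τ₃^2 + (21)*τ₂^2*τ₃ + (21)*τ₁*τ₃^2 : ℝ), ((72)*τ₃^3 + (24)*τ₂*τ₃^2 : ℝ), ((9)*τ₃^3 : ℝ), ((3)*τ₃ + (18)*τ₃^2 + (36)*τ₃^3 + (3)*τ₂ + (30)*τ₂*τ₃ + (84)*τ₂*τ₃^2 + (12)*τ₂^2 + (63)*τ₂^2*τ₃ + (15)*τ₂^3 + (3)*τ₁ + (24)*τ₁*τ₃ + (63)*τ₁*τ₃^2 + (18)*τ₁*τ₂ + (90)*τ₁*τ₂*τ₃ + (30)*τ₁*τ₂^2 + (6)*τ₁^2 + (30)*τ₁^2*τ₃ + (18)*τ₁^2*τ₂ + (3)*τ₁^3 : ℝ), ((3) + (18)*τ₃ + (45)*τ₃^2 + (12)*τ₂ + (60)*τ₂*τ₃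 + (18)*τ₂^2 + (6)*τ₁ + (36)*τ₁*τ₃ + (18)*τ₁*τ₂ + (3)*τ₁^2 : ℝ), ((9)*τ₃ + (3)*τ₂ : ℝ), ((9)*τ₃ + (90)*τ₃^2 + (252)*τ₃^3 + (6)*τ₂ + (120)*τ₂*τ₃ + (504)*τ₂*τ₃^2 + (36)*τ₂^2 + (315)*τ₂^2*τ₃ + (60)*τ₂^3 + (3)*τ₁ + (72)*τ₁*τ₃ + (315)*τ₁*τ₃^2 + (36)*τ₁*τ₂ + (360)*τ₁*τ₂*τ₃ + (90)*τ₁*τ₂^2 + (6)*τ₁^2 + (90)*τ₁^2*τ₃ + (36)*τ₁^2*τ₂ + (3)*τ₁^3 : ℝ), ((36)*τ₃ + (180)*τ₃^2 + (12)*τ₂ + (180)*τ₂*τ₃ + (36)*τ₂^2 + (72)*τ₁*τ₃ + (18)*τ₁*τ₂ : ℝ), ((9)*τ₃ : ℝ), ((9)*τ₃ + (180)*τ₃^2 + (756)*τ₃^3 + (3)*τ₂ + (180)*τ₂*τ₃ + (1260)*τ₂*τ₃^2 + (36)*τ₂^2 + (630)*τ₂^2*τ₃ + (90)*τ₂^3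 + (72)*τ₁*τ₃ + (630)*τ₁*τ₃^2 + (18)*τ₁*τ₂ + (540)*τ₁*τ₂*τ₃ + (90)*τ₁*τ₂^2 + (90)*τ₁^2*τ₃ + (18)*τ₁^2*τ₂ : ℝ), ((18)*τ₃ + (270)*τ₃^2 + (180)*τ₂*τ₃ + (18)*τ₂^2 + (36)*τ₁*τ₃ : ℝ), ((3)*τ₃ + (180)*τ₃^2 + (1260)*τ₃^3 + (120)*τ₂*τ₃ + (1680)*τ₂*τ₃^2 + (12)*τ₂^2 + (630)*τ₂^2*τ₃ + (60)*τ₂^3 + (24)*τ₁*τ₃ + (630)*τ₁*τ₃^2 + (360)*τ₁*τ₂*τ₃ + (30)*τ₁*τ₂^2 + (30)*τ₁^2*τ₃ : ℝ), ((180)*τ₃^2 + (60)*τ₂*τ₃ : ℝ), ((90)*τ₃^2 + (1260)*τ₃^3 + (30)*τ₂*τ₃ + (1260)*τ₂*τ₃^2 + (315)*τ₂^2*τ₃ + (15)*τ₂^3 + (315)*τ₁*τ₃^2 + (90)*τ₁*τ₂*τ₃ : ℝ), ((45)*τ₃^2 : ℝ), ((18)*τ₃^2 + (756)*τ₃^3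 + (504)*τ₂*τ₃^2 + (63)*τ₂^2*τ₃ + (63)*τ₁*τ₃^2 : ℝ), ((252)*τ₃^3 + (84)*τ₂*τ₃^2 : ℝ), ((36)*τ₃^3 : ℝ), ((1) + (9)*τ₃ + (45)*τ₃^2 + (84)*τ₃^3 + (6)*τ₂ + (60)*τ₂*τ₃ + (168)*τ₂*τ₃^2 + (18)*τ₂^2 + (105)*τ₂^2*τ₃ + (20)*τ₂^3 + (3)*τ₁ + (36)*τ₁*τ₃ + (105)*τ₁*τ₃^2 + (18)*τ₁*τ₂ + (120)*τ₁*τ₂*τ₃ + (30)*τ₁*τ₂^2 + (3)*τ₁^2 + (30)*τ₁^2*τ₃ + (12)*τ₁^2*τ₂ + τ₁^3 : ℝ), ((18)*τ₃ + (60)*τ₃^2 + (6)*τ₂ + (60)*τ₂*τ₃ + (12)*τ₂^2 + (24)*τ₁*τ₃ + (6)*τ₁*τ₂ : ℝ), ((3)*τ₃ : ℝ), ((18)*τ₃ + (180)*τ₃^2 + (504)*τ₃^3 + (6)*τ₂ + (180)*τ₂*τ₃ + (840)*τ₂*τ₃^2 + (36)*τ₂^2 + (420)*τ₂^2*τ₃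 + (60)*τ₂^3 + (72)*τ₁*τ₃ + (420)*τ₁*τ₃^2 + (18)*τ₁*τ₂ + (360)*τ₁*τ₂*τ₃ + (60)*τ₁*τ₂^2 + (60)*τ₁^2*τ₃ + (12)*τ₁^2*τ₂ : ℝ), ((18)*τ₃ + (180)*τ₃^2 + (120)*τ₂*τ₃ + (12)*τ₂^2 + (24)*τ₁*τ₃ : ℝ), ((9)*τ₃ + (270)*τ₃^2 + (1260)*τ₃^3 + (180)*τ₂*τ₃ + (1680)*τ₂*τ₃^2 + (18)*τ₂^2 + (630)*τ₂^2*τ₃ + (60)*τ₂^3 + (36)*τ₁*τ₃ + (630)*τ₁*τ₃^2 + (360)*τ₁*τ₂*τ₃ + (30)*τ₁*τ₂^2 + (30)*τ₁^2*τ₃ : ℝ), ((180)*τ₃^2 + (60)*τ₂*τ₃ : ℝ), ((180)*τ₃^2 + (1680)*τ₃^3 + (60)*τ₂*τ₃ + (1680)*τ₂*τ₃^2 + (420)*τ₂^2*τ₃ + (20)*τ₂^3 + (420)*τ₁*τ₃^2 + (120)*τ₁*τ₂*τ₃ : ℝ), ((60)*τ₃^2 : ℝ), ((45)*τ₃^2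 + (1260)*τ₃^3 + (840)*τ₂*τ₃^2 + (105)*τ₂^2*τ₃ + (105)*τ₁*τ₃^2 : ℝ), ((504)*τ₃^3 + (168)*τ₂*τ₃^2 : ℝ), ((84)*τ₃^3 : ℝ), ((9)*τ₃ + (60)*τ₃^2 + (126)*τ₃^3 + (3)*τ₂ + (60)*τ₂*τ₃ + (210)*τ₂*τ₃^2 + (12)*τ₂^2 + (105)*τ₂^2*τ₃ + (15)*τ₂^3 + (24)*τ₁*τ₃ + (105)*τ₁*τ₃^2 + (6)*τ₁*τ₂ + (90)*τ₁*τ₂*τ₃ + (15)*τ₁*τ₂^2 + (15)*τ₁^2*τ₃ + (3)*τ₁^2*τ₂ : ℝ), ((6)*τ₃ + (45)*τ₃^2 + (30)*τ₂*τ₃ + (3)*τ₂^2 + (6)*τ₁*τ₃ : ℝ), ((9)*τ₃ + (180)*τ₃^2 + (630)*τ₃^3 + (120)*τ₂*τ₃ + (840)*τ₂*τ₃^2 + (12)*τ₂^2 + (315)*τ₂^2*τ₃ + (30)*τ₂^3 + (24)*τ₁*τ₃ + (315)*τ₁*τ₃^2 + (180)*τ₁*τ₂*τ₃ + (15)*τ₁*τ₂^2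 + (15)*τ₁^2*τ₃ : ℝ), ((90)*τ₃^2 + (30)*τ₂*τ₃ : ℝ), ((180)*τ₃^2 + (1260)*τ₃^3 + (60)*τ₂*τ₃ + (1260)*τ₂*τ₃^2 + (315)*τ₂^2*τ₃ + (15)*τ₂^3 + (315)*τ₁*τ₃^2 + (90)*τ₁*τ₂*τ₃ : ℝ), ((45)*τ₃^2 : ℝ), ((60)*τ₃^2 + (1260)*τ₃^3 + (840)*τ₂*τ₃^2 + (105)*τ₂^2*τ₃ + (105)*τ₁*τ₃^2 : ℝ), ((630)*τ₃^3 + (210)*τ₂*τ₃^2 : ℝ), ((126)*τ₃^3 : ℝ), ((3)*τ₃ + (45)*τ₃^2 + (126)*τ₃^3 + (30)*τ₂*τ₃ + (168)*τ₂*τ₃^2 + (3)*τ₂^2 + (63)*τ₂^2*τ₃ + (6)*τ₂^3 + (6)*τ₁*τ₃ + (63)*τ₁*τ₃^2 + (36)*τ₁*τ₂*τ₃ + (3)*τ₁*τ₂^2 + (3)*τ₁^2*τ₃ : ℝ), ((18)*τ₃^2 + (6)*τ₂*τ₃ : ℝ), ((90)*τ₃^2 + (504)*τ₃^3 + (30)*τ₂*τ₃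 + (504)*τ₂*τ₃^2 + (126)*τ₂^2*τ₃ + (6)*τ₂^3 + (126)*τ₁*τ₃^2 + (36)*τ₁*τ₂*τ₃ : ℝ), ((18)*τ₃^2 : ℝ), ((45)*τ₃^2 + (756)*τ₃^3 + (504)*τ₂*τ₃^2 + (63)*τ₂^2*τ₃ + (63)*τ₁*τ₃^2 : ℝ), ((504)*τ₃^3 + (168)*τ₂*τ₃^2 : ℝ), ((126)*τ₃^3 : ℝ), ((18)*τ₃^2 + (84)*τ₃^3 + (6)*τ₂*τ₃ + (84)*τ₂*τ₃^2 + (21)*τ₂^2*τ₃ + τ₂^3 + (21)*τ₁*τ₃^2 + (6)*τ₁*τ₂*τ₃ : ℝ), ((3)*τ₃^2 : ℝ), ((18)*τ₃^2 + (252)*τ₃^3 + (168)*τ₂*τ₃^2 + (21)*τ₂^2*τ₃ + (21)*τ₁*τ₃^2 : ℝ), ((252)*τ₃^3 + (84)*τ₂*τ₃^2 : ℝ), ((84)*τ₃^3 : ℝ), ((3)*τ₃^2 + (36)*τ₃^3 + (24)*τ₂*τ₃^2 + (3)*τ₂^2*τ₃ + (3)*τ₁*τ₃^2 : ℝ), ((72)*τ₃^3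 + (24)*τ₂*τ₃^2 : ℝ), ((36)*τ₃^3 : ℝ), ((9)*τ₃^3 + (3)*τ₂*τ₃^2 : ℝ), ((9)*τ₃^3 : ℝ), (τ₃^3 : ℝ)] i * (z.1.1 ^ (![0, 0, 0, 0, 0, 0, 0, 0, 0, 0, 0, 0, 0, 0, 0, 0, 0, 0, 0, 0, 0, 0, 1, 1, 1, 1, 1, 1, 1, 1, 1, 1, 1, 1, 1, 1, 1, 1, 1, 1, 2, 2, 2, 2, 2, 2, 2, 2, 2, 2, 2, 2, 2, 2, 2, 3, 3, 3, 3, 3, 3, 3, 3, 3, 3, 3, 3, 4, 4, 4, 4, 4, 4, 4, 4, 4, 5, 5, 5, 5, 5, 5, 5, 6, 6, 6, 6, 6, 7, 7, 7, 8, 8, 9] : Fin 94 → ℕ) i * z.1.2 ^ (![0, 0, 0, 0, 1, 1, 1, 2, 2, 2, 3, 3, 3, 4, 4, 5, 5, 6, 6, 7, 8, 9, 0, 0, 0, 1, 1, 1, 2, 2, 2, 3, 3, 4, 4, 5, 5, 6, 7, 8, 0, 0, 0, 1, 1, 1, 2, 2, 3, 3, 4, 4, 5, 6, 7, 0, 0,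 0, 1, 1, 2, 2, 3, 3, 4, 5, 6, 0, 0, 1, 1, 2, 2, 3, 4, 5, 0, 0, 1, 1, 2, 3, 4, 0, 0, 1, 2, 3, 0, 1, 2, 0, 1, 0] : Fin 94 → ℕ) i * z.2 ^ (![0, 1, 2, 3, 0, 1, 2, 0, 1, 2, 0, 1, 2, 0, 1, 0, 1, 0, 1, 0, 0, 0, 0, 1, 2, 0, 1, 2, 0, 1, 2, 0, 1, 0, 1, 0, 1, 0, 0, 0, 0, 1, 2, 0, 1, 2, 0, 1, 0, 1, 0, 1, 0, 0, 0, 0, 1, 2, 0, 1, 0, 1, 0, 1, 0, 0, 0, 0, 1, 0, 1, 0, 1, 0, 0, 0, 0, 1, 0, 1, 0, 0, 0, 0, 1, 0, 0, 0, 0, 0, 0, 0, 0, 0] : Fin 94 → ℕ) i) := by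
      funext z
      simp only [Fin.sum_univ_succ, Fin.sum_univ_zero, Matrix.cons_val_zero, Matrix.cons_val_succ]
      ring
    rw [hexp, master]
    simp only [Fin.sum_univ_succ, Fin.sum_univ_zero, Matrix.cons_val_zero, Matrix.cons_val_succ,
      Mo_zero, Mo_one, Mo_two, Mo_three, Mo_four, Mo_five, Mo_six, Mo_seven, Mo_eight, Mo_nine]
    ring
  have h1 := hmom 1
  rw [hTX1, hIX1, hTY1, hIY1] at h1
  have h2 := hmom 2
  rw [hTX2, hIX2, hTY2, hIY2] at h2
  have h3 := hmom 3
  rw [hTX3, hIX3, hTY3, hIY3] at h3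
  have hl1 : τ₁ + τ₂ + 7*τ₃ = 0 := by linear_combination -h1
  have hp2 : (13*τ₃ + 1) * (2*τ₂ + 3*τ₃) = 0 := by
    linear_combination (-(1:ℝ)/2) * h2 + (((19)*τ₃ + (13)*τ₂ + τ₁ : ℝ)/2) * h1
  have hp3 : 1584*τ₂^2*τ₃ + 4284*τ₂*τ₃^2 + 8928*τ₃^3 + 72*τ₂^2 + 180*τ₂*τ₃
      + 576*τ₃^2 + 18*τ₃ = 0 := by
    linear_combination (-(1:ℝ)) * h3
      + ((6) + (126)*τ₃ + (2551)*τ₃^2 + (12)*τ₂ + (848)*τ₂*τ₃ + (211)*τ₂^2 + (6)*τ₁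
          + (194)*τ₁*τ₃ + (32)*τ₁*τ₂ + (7)*τ₁^2 : ℝ) * h1
  rcases mul_eq_zero.mp hp2 with hc | hc
  · exfalso
    have ht3 : τ₃ = -1/13 := by linarith
    rw [ht3] at hp3
    nlinarith [sq_nonneg (τ₂ - 3/26), hp3]
  · have h6 : τ₃ * (6066*τ₃^2 + 468*τ₃ + 18) = 0 := by
      linear_combination hp3 - ((36)*τ₃ + (954)*τ₃^2 + (36)*τ₂ + (792)*τ₂*τ₃ : ℝ) * hc
    have ht3 : τ₃ = 0 := by
      rcases mul_eq_zero.mp h6 with h' | h'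
      · exact h'
      · exfalso; nlinarith [sq_nonneg (τ₃ + 13/337)]
    have ht2 : τ₂ = 0 := by rw [ht3] at hc; linarith
    have ht1 : τ₁ = 0 := by rw [ht3, ht2] at hl1; linarith
    exact ⟨ht1, ht2, ht3⟩
end

section
/- Let Z be Bernoulli(1/2)-distributed and let U, ε_X, ε_Y be standard Gaussian, with Z, U, ε_X, ε_Y jointly independent, and for τ ∈ ℝ define K_τ := U + ε_Y + τ·(2·Z·U − U + ε_X). Then E[K_τ² | Z = 1] = 2τ² + 2τ + 2 and E[K_τ² | Z = 0] = 2τ² − 2τ + 2; consequently, if Z is independent of K_τ then τ = 0. (Hence in the SCM X := 2ZU − U + ε_X, Y := X + U + ε_Y, the causal coefficient is identifiable from the independence restriction even though Z is independent of X.) -/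
open MeasureTheory ProbabilityTheory

section StatementTenAux

open Real Set
open scoped ENNReal NNReal

private lemma st10_gaussianPDFReal01_eq (x : ℝ) :
    gaussianPDFReal 0 1 x = (Real.sqrt (2*π))⁻¹ * Real.exp (-(1/2) * x^2) := by
  unfold gaussianPDFReal
  simp only [NNReal.coe_one, mul_one, sub_zero]
  congr 1
  ring

private lemma st10_integral_gaussianReal01 (f : ℝ → ℝ) :
    ∫ x, f x ∂(gaussianReal 0 1) = ∫ x, gaussianPDFReal 0 1 x * f x := by
  rw [gaussianReal_of_var_ne_zero _ one_ne_zero]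
  have hm : Measurable fun x => (gaussianPDFReal 0 1 x).toNNReal :=
    (measurable_gaussianPDFReal 0 1).real_toNNReal
  have h : volume.withDensity (gaussianPDF 0 1)
      = volume.withDensity (fun x => ((gaussianPDFReal 0 1 x).toNNReal : ℝ≥0∞)) := rfl
  rw [h, integral_withDensity_eq_integral_smul hm]
  congr 1; ext x
  simp [NNReal.smul_def, Real.coe_toNNReal _ (gaussianPDFReal_nonneg 0 1 x)]

private lemma st10_gamma_3half : Real.Gamma (3/2) = Real.sqrt π / 2 := by
  have h : (3/2 : ℝ) = 1/2 + 1 := by norm_num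
  rw [h, Real.Gamma_add_one (by norm_num), Real.Gamma_one_half_eq]
  ring

private lemma st10_half_rpow : ((1/2 : ℝ)) ^ (-(3:ℝ)/2) = 2 * Real.sqrt 2 := by
  rw [show ((1/2:ℝ)) = 2⁻¹ by norm_num, Real.inv_rpow (by norm_num),
    ← Real.rpow_neg (by norm_num)]
  rw [show (-(-(3:ℝ)/2)) = 1 + 1/2 by norm_num, Real.rpow_add (by norm_num), Real.rpow_one]
  rw [Real.sqrt_eq_rpow]

private lemma st10_integral_sq_exp : ∫ x : ℝ, x ^ 2 * Real.exp (-(1/2) * x^2)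
    = Real.sqrt 2 * Real.sqrt π := by
  have habs := integral_comp_abs (f := fun t : ℝ => t ^ 2 * Real.exp (-(1/2) * t^2))
  simp only [sq_abs] at habs
  rw [habs]
  have h := integral_rpow_mul_exp_neg_mul_rpow (p := 2) (q := 2) (b := 1/2)
    (by norm_num) (by norm_num) (by norm_num)
  rw [setIntegral_congr_fun measurableSet_Ioi
    (g := fun x : ℝ => x ^ (2:ℝ) * Real.exp (-(1/2) * x ^ (2:ℝ)))
    (by intro x hx; norm_num [Real.rpow_natCast x 2])]
  rw [h, show (-(2+1)/2 : ℝ) = -(3:ℝ)/2 by norm_num, show ((2+1)/2 : ℝ) = 3/2 by norm_num,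
    st10_gamma_3half, st10_half_rpow]
  ring

private lemma st10_integrable_sq_exp :
    Integrable (fun x : ℝ => x ^ 2 * Real.exp (-(1/2) * x^2)) := by
  have h := integrable_rpow_mul_exp_neg_mul_sq (b := 1/2) (by norm_num) (s := 2) (by norm_num)
  have e : (fun x : ℝ => x ^ (2:ℝ) * Real.exp (-(1/2) * x ^ 2))
      = fun x : ℝ => x ^ 2 * Real.exp (-(1/2) * x^2) := by
    ext x; norm_num [Real.rpow_natCast x 2]
  rwa [e] at h

private lemma st10_gauss_sq_integral : ∫ x, x ^ 2 ∂(gaussianReal 0 1) = 1 := by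
  rw [st10_integral_gaussianReal01]
  have e : (fun x : ℝ => gaussianPDFReal 0 1 x * x ^ 2)
      = fun x => (Real.sqrt (2*π))⁻¹ * (x ^ 2 * Real.exp (-(1/2) * x^2)) := by
    ext x; rw [st10_gaussianPDFReal01_eq]; ring
  rw [e, integral_const_mul, st10_integral_sq_exp, Real.sqrt_mul (by norm_num)]
  field_simp

private lemma st10_gauss_sq_integrable : Integrable (fun x => x ^ 2) (gaussianReal 0 1) := by
  rw [gaussianReal_of_var_ne_zero _ one_ne_zero, gaussianPDF_def]
  rw [integrable_withDensity_iff (measurable_gaussianPDFReal 0 1).ennreal_ofReal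
    (ae_of_all _ fun x => ENNReal.ofReal_lt_top)]
  have e : (fun x : ℝ => x ^ 2 * (ENNReal.ofReal (gaussianPDFReal 0 1 x)).toReal)
      = fun x => (Real.sqrt (2*π))⁻¹ * (x ^ 2 * Real.exp (-(1/2) * x^2)) := by
    ext x
    rw [ENNReal.toReal_ofReal (gaussianPDFReal_nonneg 0 1 x), st10_gaussianPDFReal01_eq]; ring
  rw [e]
  exact st10_integrable_sq_exp.const_mul _

private lemma st10_gauss_mean : ∫ x, x ∂(gaussianReal 0 1) = 0 := by
  rw [st10_integral_gaussianReal01]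
  have h := MeasureTheory.integral_neg_eq_self (fun x : ℝ => gaussianPDFReal 0 1 x * x) volume
  have e : (fun x : ℝ => gaussianPDFReal 0 1 (-x) * (-x))
      = fun x => -(gaussianPDFReal 0 1 x * x) := by
    ext x; rw [st10_gaussianPDFReal01_eq, st10_gaussianPDFReal01_eq]; ring_nf
  rw [e, integral_neg] at h
  linarith

private lemma st10_memLp_of_gauss {Ω : Type*} [MeasurableSpace Ω] (μ : Measure Ω)
    (U : Ω → ℝ) (hUm : Measurable U)
    (hU : Measure.map U μ = gaussianReal 0 1) : MemLp U 2 μ := by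
  have hid : MemLp (id : ℝ → ℝ) 2 (Measure.map U μ) := by
    rw [hU]
    exact (memLp_two_iff_integrable_sq aestronglyMeasurable_id).mpr
      (by simpa using st10_gauss_sq_integrable)
  simpa using (memLp_map_measure_iff aestronglyMeasurable_id hUm.aemeasurable).mp hid

private lemma st10_mean_of_gauss {Ω : Type*} [MeasurableSpace Ω] (μ : Measure Ω)
    (U : Ω → ℝ) (hUm : Measurable U)
    (hU : Measure.map U μ = gaussianReal 0 1) : ∫ ω, U ω ∂μ = 0 := by
  have := integral_map (μ := μ) (f := fun x : ℝ => x) hUm.aemeasurable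
    measurable_id.aestronglyMeasurable
  rw [hU, st10_gauss_mean] at this
  exact this.symm

private lemma st10_sq_of_gauss {Ω : Type*} [MeasurableSpace Ω] (μ : Measure Ω)
    (U : Ω → ℝ) (hUm : Measurable U)
    (hU : Measure.map U μ = gaussianReal 0 1) : ∫ ω, (U ω) ^ 2 ∂μ = 1 := by
  have := integral_map (μ := μ) (f := fun x : ℝ => x ^ 2) hUm.aemeasurable
    (measurable_id.pow_const 2).aestronglyMeasurable
  rw [hU, st10_gauss_sq_integral] at this
  exact this.symm

private lemma st10_cond_eq {Ω : Type*} [MeasurableSpace Ω] (μ : Measure Ω)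
    [IsProbabilityMeasure μ]
    (Z : Ω → ℝ) (hZm : Measurable Z) (z : ℝ) (G : Ω → ℝ) (hGint : Integrable G μ)
    (hZG : IndepFun Z G μ) :
    ∫ ω in {ω | Z ω = z}, G ω ∂μ = (μ {ω | Z ω = z}).toReal * ∫ ω, G ω ∂μ := by
  have hs : MeasurableSet {ω | Z ω = z} := hZm (measurableSet_singleton z)
  set φ : ℝ → ℝ := Set.indicator ({z} : Set ℝ) (fun _ => 1) with hφ
  have hφm : Measurable φ := measurable_const.indicator (measurableSet_singleton z)
  have hind : IndepFun (φ ∘ Z) G μ := hZG.comp hφm measurable_id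
  have hcomp : φ ∘ Z = Set.indicator {ω | Z ω = z} (fun _ => 1) := by
    ext ω
    by_cases hω : Z ω = z <;> simp [hφ, Set.indicator_apply, hω]
  have hφZint : Integrable (φ ∘ Z) μ := by
    rw [hcomp]; exact (integrable_const 1).indicator hs
  have hmul := hind.integral_mul_eq_mul_integral hφZint.aestronglyMeasurable hGint.aestronglyMeasurable
  have hprod : (φ ∘ Z) * G = Set.indicator {ω | Z ω = z} G := by
    ext ω
    by_cases hω : ω ∈ {ω | Z ω = z}
    · simp [hcomp, Set.indicator_of_mem hω]
    · simp [hcomp, Set.indicator_of_notMem hω]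
  rw [hprod, integral_indicator hs] at hmul
  rw [hmul, hcomp, integral_indicator hs, setIntegral_const, smul_eq_mul, mul_one, measureReal_def]

private lemma st10_key_calc {Ω : Type*} [MeasurableSpace Ω] (μ : Measure Ω)
    [IsProbabilityMeasure μ] (U εX εY : Ω → ℝ)
    (hUm : Measurable U) (hεXm : Measurable εX) (hεYm : Measurable εY)
    (hUY : IndepFun U εY μ) (hUX : IndepFun U εX μ) (hXY : IndepFun εX εY μ)
    (hU : Measure.map U μ = gaussianReal 0 1)
    (hεX : Measure.map εX μ = gaussianReal 0 1)
    (hεY : Measure.map εY μ = gaussianReal 0 1)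
    (a τ : ℝ) :
    ∫ ω, (a * U ω + εY ω + τ * εX ω) ^ 2 ∂μ = a ^ 2 + 1 + τ ^ 2 := by
  have hU2 := st10_memLp_of_gauss μ U hUm hU
  have hX2 := st10_memLp_of_gauss μ εX hεXm hεX
  have hY2 := st10_memLp_of_gauss μ εY hεYm hεY
  have iU1 : Integrable U μ := hU2.integrable one_le_two
  have iX1 : Integrable εX μ := hX2.integrable one_le_two
  have iY1 : Integrable εY μ := hY2.integrable one_le_two
  have iU2 : Integrable (fun ω => (U ω) ^ 2) μ :=
    (memLp_two_iff_integrable_sq hUm.aestronglyMeasurable).mp hU2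
  have iX2 : Integrable (fun ω => (εX ω) ^ 2) μ :=
    (memLp_two_iff_integrable_sq hεXm.aestronglyMeasurable).mp hX2
  have iY2 : Integrable (fun ω => (εY ω) ^ 2) μ :=
    (memLp_two_iff_integrable_sq hεYm.aestronglyMeasurable).mp hY2
  have iUY : Integrable (fun ω => U ω * εY ω) μ := hUY.integrable_mul iU1 iY1
  have iUX : Integrable (fun ω => U ω * εX ω) μ := hUX.integrable_mul iU1 iX1
  have iXY : Integrable (fun ω => εX ω * εY ω) μ := hXY.integrable_mul iX1 iY1
  have eUY : ∫ ω, U ω * εY ω ∂μ = (∫ ω, U ω ∂μ) * ∫ ω, εY ω ∂μ :=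
    hUY.integral_mul_eq_mul_integral iU1.aestronglyMeasurable iY1.aestronglyMeasurable
  have eUX : ∫ ω, U ω * εX ω ∂μ = (∫ ω, U ω ∂μ) * ∫ ω, εX ω ∂μ :=
    hUX.integral_mul_eq_mul_integral iU1.aestronglyMeasurable iX1.aestronglyMeasurable
  have eXY : ∫ ω, εX ω * εY ω ∂μ = (∫ ω, εX ω ∂μ) * ∫ ω, εY ω ∂μ :=
    hXY.integral_mul_eq_mul_integral iX1.aestronglyMeasurable iY1.aestronglyMeasurable
  have h6 : ∫ ω, (a * U ω + εY ω + τ * εX ω) ^ 2 ∂μ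
      = ∫ ω, (a ^ 2 * (U ω) ^ 2 + (εY ω) ^ 2 + τ ^ 2 * (εX ω) ^ 2
          + (2 * a) * (U ω * εY ω)) + ((2 * a * τ) * (U ω * εX ω)
          + (2 * τ) * (εX ω * εY ω)) ∂μ := by
    congr 1; ext ω; ring
  have I1 : ∫ ω, (2 * a * τ) * (U ω * εX ω) + (2 * τ) * (εX ω * εY ω) ∂μ = 0 := by
    rw [integral_add (by exact iUX.const_mul _) (by exact iXY.const_mul _),
      integral_const_mul, integral_const_mul, eUX, eXY,
      st10_mean_of_gauss μ U hUm hU, st10_mean_of_gauss μ εX hεXm hεX]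
    ring
  have I2 : ∫ ω, a ^ 2 * (U ω) ^ 2 + (εY ω) ^ 2 + τ ^ 2 * (εX ω) ^ 2
      + (2 * a) * (U ω * εY ω) ∂μ = a ^ 2 + 1 + τ ^ 2 := by
    rw [integral_add (by exact ((iU2.const_mul _).add iY2).add (iX2.const_mul _))
        (by exact iUY.const_mul _),
      integral_add (by exact (iU2.const_mul _).add iY2) (by exact iX2.const_mul _),
      integral_add (by exact iU2.const_mul _) (by exact iY2),
      integral_const_mul, integral_const_mul, integral_const_mul, eUY,
      st10_mean_of_gauss μ U hUm hU, st10_sq_of_gauss μ U hUm hU,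
      st10_sq_of_gauss μ εX hεXm hεX, st10_sq_of_gauss μ εY hεYm hεY]
    ring
  rw [h6, integral_add
      (by exact (((iU2.const_mul _).add iY2).add (iX2.const_mul _)).add (iUY.const_mul _))
      (by exact (iUX.const_mul _).add (iXY.const_mul _)), I1, I2]
  ring

end StatementTenAux

open Set
open scoped ENNReal

/-- With `Z ~ Bernoulli(1/2)`, `U, ε_X, ε_Y` standard Gaussian, all jointly
independent, and `K_τ := U + ε_Y + τ·(2·Z·U − U + ε_X)`:
`E[K_τ² | Z = 1] = 2τ² + 2τ + 2`, `E[K_τ² | Z = 0] = 2τ² − 2τ + 2`, and independence of `Z`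
and `K_τ` forces `τ = 0`. -/
theorem statement10 {Ω : Type*} [MeasurableSpace Ω] (μ : Measure Ω) [IsProbabilityMeasure μ]
    (Z U εX εY : Ω → ℝ)
    (hZm : Measurable Z) (hUm : Measurable U) (hεXm : Measurable εX) (hεYm : Measurable εY)
    (hindep : iIndepFun ![Z, U, εX, εY] μ)
    (hZ1 : μ {ω | Z ω = 1} = 1/2) (hZ0 : μ {ω | Z ω = 0} = 1/2)
    (hU : Measure.map U μ = gaussianReal 0 1)
    (hεX : Measure.map εX μ = gaussianReal 0 1)
    (hεY : Measure.map εY μ = gaussianReal 0 1)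
    (τ : ℝ) :
    (∫ ω, (U ω + εY ω + τ * (2 * Z ω * U ω - U ω + εX ω)) ^ 2
        ∂(μ[|{ω | Z ω = 1}])) = 2 * τ ^ 2 + 2 * τ + 2 ∧
      (∫ ω, (U ω + εY ω + τ * (2 * Z ω * U ω - U ω + εX ω)) ^ 2
        ∂(μ[|{ω | Z ω = 0}])) = 2 * τ ^ 2 - 2 * τ + 2 ∧
      (IndepFun Z (fun ω => U ω + εY ω + τ * (2 * Z ω * U ω - U ω + εX ω)) μ → τ = 0) := by
  have hm : ∀ i, Measurable (![Z, U, εX, εY] i) := by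
    intro i; fin_cases i <;> simpa
  have hUY : IndepFun U εY μ := by simpa using hindep.indepFun (show (1 : Fin 4) ≠ 3 by decide)
  have hUX : IndepFun U εX μ := by simpa using hindep.indepFun (show (1 : Fin 4) ≠ 2 by decide)
  have hXY : IndepFun εX εY μ := by simpa using hindep.indepFun (show (2 : Fin 4) ≠ 3 by decide)
  have hU2 := st10_memLp_of_gauss μ U hUm hU
  have hX2 := st10_memLp_of_gauss μ εX hεXm hεX
  have hY2 := st10_memLp_of_gauss μ εY hεYm hεY
  have hZg : ∀ a : ℝ, IndepFun Z (fun ω => a * U ω + εY ω + τ * εX ω) μ := by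
    intro a
    have h := hindep.indepFun_finset {0} {1, 2, 3} (by decide) hm
    have h2 := h.comp (_mγ := Real.measurableSpace) (φ := fun v : ({0} : Finset (Fin 4)) → ℝ => v ⟨0, by decide⟩)
      (ψ := fun v : ({1, 2, 3} : Finset (Fin 4)) → ℝ =>
        a * v ⟨1, by decide⟩ + v ⟨3, by decide⟩ + τ * v ⟨2, by decide⟩)
      (measurable_pi_apply _) (by fun_prop)
    simpa [Function.comp_def] using h2
  have hg2 : ∀ a : ℝ, MemLp (fun ω => a * U ω + εY ω + τ * εX ω) 2 μ := by
    intro a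
    exact ((hU2.const_mul a).add hY2).add (hX2.const_mul τ)
  have iG : ∀ a : ℝ, Integrable (fun ω => (a * U ω + εY ω + τ * εX ω) ^ 2) μ := fun a =>
    (memLp_two_iff_integrable_sq (hg2 a).aestronglyMeasurable).mp (hg2 a)
  have hsz : ∀ z : ℝ, MeasurableSet {ω | Z ω = z} := fun z => hZm (measurableSet_singleton z)
  have htoReal : ∀ c : ℝ, ((1/2 : ℝ≥0∞))⁻¹.toReal • ((1/2 : ℝ≥0∞).toReal * c) = c := by
    intro c
    rw [ENNReal.toReal_inv, smul_eq_mul, ENNReal.toReal_div]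
    norm_num
    ring
  have main : ∀ z : ℝ, μ {ω | Z ω = z} = 1/2 →
      (∫ ω, (U ω + εY ω + τ * (2 * Z ω * U ω - U ω + εX ω)) ^ 2 ∂(μ[|{ω | Z ω = z}]))
        = (1 + τ * (2 * z - 1)) ^ 2 + 1 + τ ^ 2 := by
    intro z hz
    set a := 1 + τ * (2 * z - 1) with ha
    have hEq : EqOn (fun ω => (U ω + εY ω + τ * (2 * Z ω * U ω - U ω + εX ω)) ^ 2)
        (fun ω => (a * U ω + εY ω + τ * εX ω) ^ 2) {ω | Z ω = z} := by
      intro ω hω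
      simp only [Set.mem_setOf_eq] at hω
      simp only [hω, ha]
      ring
    rw [ProbabilityTheory.cond, integral_smul_measure,
      setIntegral_congr_fun (hsz z) hEq,
      st10_cond_eq μ Z hZm z _ (iG a) ((hZg a).comp measurable_id (measurable_id.pow_const 2)),
      st10_key_calc μ U εX εY hUm hεXm hεYm hUY hUX hXY hU hεX hεY a τ, hz, htoReal]
  refine ⟨by rw [main 1 hZ1]; ring, by rw [main 0 hZ0]; ring, ?_⟩
  intro h
  have hdisj : Disjoint {ω | Z ω = 1} {ω | Z ω = 0} := by
    rw [Set.disjoint_left]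
    rintro ω h1 h0
    simp only [Set.mem_setOf_eq] at h1 h0
    rw [h1] at h0; norm_num at h0
  have hunion : μ ({ω | Z ω = 1} ∪ {ω | Z ω = 0}) = 1 := by
    rw [measure_union hdisj (hsz 0), hZ1, hZ0]
    norm_num
    exact ENNReal.inv_two_add_inv_two
  have hZ01 : ∀ᵐ ω ∂μ, Z ω = 1 ∨ Z ω = 0 := by
    rw [MeasureTheory.ae_iff]
    have e : {ω | ¬(Z ω = 1 ∨ Z ω = 0)} = ({ω | Z ω = 1} ∪ {ω | Z ω = 0})ᶜ := by
      ext ω; simp [not_or]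
    rw [e, measure_compl ((hsz 1).union (hsz 0)) (measure_ne_top μ _), hunion, measure_univ,
      tsub_self]
  have hZU2 : MemLp (fun ω => Z ω * U ω) 2 μ := by
    refine hU2.of_le ((hZm.mul hUm).aestronglyMeasurable) ?_
    filter_upwards [hZ01] with ω hω
    rcases hω with h1 | h1 <;> simp [h1]
  have hK2 : MemLp (fun ω => U ω + εY ω + τ * (2 * Z ω * U ω - U ω + εX ω)) 2 μ := by
    have e : (fun ω => U ω + εY ω + τ * (2 * Z ω * U ω - U ω + εX ω))
        = fun ω => ((1 - τ) * U ω + εY ω + τ * εX ω) + (2 * τ) * (Z ω * U ω) := by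
      ext ω; ring
    rw [e]
    exact (((hU2.const_mul _).add hY2).add (hX2.const_mul _)).add (hZU2.const_mul _)
  have iK2 : Integrable (fun ω => (U ω + εY ω + τ * (2 * Z ω * U ω - U ω + εX ω)) ^ 2) μ :=
    (memLp_two_iff_integrable_sq hK2.aestronglyMeasurable).mp hK2
  have hZK2 : IndepFun Z (fun ω => (U ω + εY ω + τ * (2 * Z ω * U ω - U ω + εX ω)) ^ 2) μ :=
    h.comp measurable_id (measurable_id.pow_const 2)
  have c1 := st10_cond_eq μ Z hZm 1 _ iK2 hZK2
  have c0 := st10_cond_eq μ Z hZm 0 _ iK2 hZK2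
  rw [hZ1] at c1
  rw [hZ0] at c0
  have d1 : (∫ ω, (U ω + εY ω + τ * (2 * Z ω * U ω - U ω + εX ω)) ^ 2 ∂(μ[|{ω | Z ω = 1}]))
      = ((1/2 : ℝ≥0∞))⁻¹.toReal • ((1/2 : ℝ≥0∞).toReal
        * ∫ ω, (U ω + εY ω + τ * (2 * Z ω * U ω - U ω + εX ω)) ^ 2 ∂μ) := by
    rw [ProbabilityTheory.cond, integral_smul_measure, hZ1, c1]
  have d0 : (∫ ω, (U ω + εY ω + τ * (2 * Z ω * U ω - U ω + εX ω)) ^ 2 ∂(μ[|{ω | Z ω = 0}]))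
      = ((1/2 : ℝ≥0∞))⁻¹.toReal • ((1/2 : ℝ≥0∞).toReal
        * ∫ ω, (U ω + εY ω + τ * (2 * Z ω * U ω - U ω + εX ω)) ^ 2 ∂μ) := by
    rw [ProbabilityTheory.cond, integral_smul_measure, hZ0, c0]
  rw [htoReal] at d1 d0
  have e1 := (main 1 hZ1).symm.trans d1
  have e0 := (main 0 hZ0).symm.trans d0
  have h40 := e1.trans e0.symm
  nlinarith [h40]
end
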